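/- In a Heyting algebra, if for all γ, δ₁, δ₂ we have (γ ⇨ (δ₁ ⊔ δ₂)) ≤ (γ ⇨ δ₁) ⊔ (γ ⇨ δ₂), then for all a, b we have (a ⇨ b) ⊔ (b ⇨ a) = ⊤. -/
import Mathlib

/-- In a Heyting algebra, if `(γ ⇨ (δ₁ ⊔ δ₂)) ≤ (γ ⇨ δ₁) ⊔ (γ ⇨ δ₂)` always
holds, then prelinearity `(a ⇨ b) ⊔ (b ⇨ a) = ⊤` holds. -/
theorem himp_sup_le_prelinear {H : Type*} [HeytingAlgebra H]
    (h : ∀ γ δ₁ δ₂ : H, (γ ⇨ (δ₁ ⊔ δ₂)) ≤ (γ ⇨ δ₁) ⊔ (γ ⇨ δ₂)) (a b : H) :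
    (a ⇨ b) ⊔ (b ⇨ a) = ⊤ := by
  have key := h (a ⊔ b) a b
  rw [himp_self] at key
  refine top_le_iff.mp (key.trans (sup_le ?_ ?_))
  · exact le_sup_right.trans' (himp_le_himp_right le_sup_right)
  · exact le_sup_left.trans' (himp_le_himp_right le_sup_left)
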